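/- Let n ≥ 1 be an integer and μ ∈ [0,1]. Define sequences (α_k) and (γ_k) by choosing γ_0 ∈ (0,1] with γ_0 ≥ μ, letting α_k ∈ (0, 1/n] be the solution of n²α_k² = (1-α_k)γ_k + α_k μ, and γ_{k+1} = (1-α_k)γ_k + α_k μ. Then for all k ≥ 0, √μ/n ≤ α_k ≤ 1/n and μ ≤ γ_k ≤ 1. -/
import Mathlib


/-- Bounds √μ/n ≤ α_k ≤ 1/n and μ ≤ γ_k ≤ 1 for the APCG parameter sequences. -/
theorem stmt_1 (n : ℕ) (hn : 1 ≤ n) (μ : ℝ) (hμ0 : 0 ≤ μ) (hμ1 : μ ≤ 1)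
    (α γ : ℕ → ℝ)
    (hγ0pos : 0 < γ 0) (hγ0le : γ 0 ≤ 1) (hγ0ge : μ ≤ γ 0)
    (hαpos : ∀ k, 0 < α k) (hαle : ∀ k, α k ≤ 1 / n)
    (hαeq : ∀ k, (n : ℝ) ^ 2 * (α k) ^ 2 = (1 - α k) * γ k + α k * μ)
    (hγrec : ∀ k, γ (k + 1) = (1 - α k) * γ k + α k * μ) :
    ∀ k, Real.sqrt μ / n ≤ α k ∧ α k ≤ 1 / n ∧ μ ≤ γ k ∧ γ k ≤ 1 := by
  have hnpos : (0 : ℝ) < n := by exact_mod_cast hn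
  have hγ : ∀ k, μ ≤ γ k ∧ γ k ≤ 1 := by
    intro k
    induction k with
    | zero => exact ⟨hγ0ge, hγ0le⟩
    | succ k ih =>
      have hα1 : α k ≤ 1 := le_trans (hαle k) (by
        rw [div_le_one hnpos]; exact_mod_cast hn)
      have h1α : 0 ≤ 1 - α k := by linarith
      have hαk := (hαpos k).le
      constructor
      · rw [hγrec k]; nlinarith [ih.1]
      · rw [hγrec k]; nlinarith [ih.2]
  intro k
  obtain ⟨h1, h2⟩ := hγ k
  refine ⟨?_, hαle k, h1, h2⟩
  have hα1 : α k ≤ 1 := le_trans (hαle k) (by rw [div_le_one hnpos]; exact_mod_cast hn)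
  have hμle : μ ≤ (n : ℝ) ^ 2 * (α k) ^ 2 := by
    rw [hαeq k]; nlinarith [(hαpos k).le]
  have : Real.sqrt μ ≤ n * α k := by
    have := Real.sqrt_le_sqrt hμle
    rwa [show (n : ℝ) ^ 2 * (α k) ^ 2 = (n * α k) ^ 2 by ring,
      Real.sqrt_sq (mul_nonneg hnpos.le (hαpos k).le)] at this
  rw [div_le_iff₀ hnpos] at *
  linarith
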